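/- In the hyperplane H = {x ∈ ℝ^{n+1} : Σx_i = 0}, the norm associated to the Voronoï region of A_n is given by ‖x‖_P = max_j x_j − min_i x_i for all x ∈ H. -/
import Mathlib


open Set Filter MeasureTheory Pointwise

/-- The hyperplane `H = {x ∈ ℝ^{n+1} : ∑ xᵢ = 0}`. -/
def Hset (n : ℕ) : Set (Fin (n + 1) → ℝ) := {x | ∑ i, x i = 0}

/-- The root lattice `Aₙ = ℤ^{n+1} ∩ H`. -/
def Alat (n : ℕ) : Set (Fin (n + 1) → ℝ) :=
  {x | (∀ i, ∃ m : ℤ, x i = (m : ℝ)) ∧ ∑ i, x i = 0}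

/-- The Voronoï region of `Aₙ` inside `H`. -/
def VorAn (n : ℕ) : Set (Fin (n + 1) → ℝ) :=
  {z | z ∈ Hset n ∧ ∀ x ∈ Alat n, ∑ i, (z i) ^ 2 ≤ ∑ i, (z i - x i) ^ 2}

/-- Orthogonal projection of `ℝ^{n+1}` onto the hyperplane `H`. -/
noncomputable def pH (n : ℕ) (u : Fin (n + 1) → ℝ) : Fin (n + 1) → ℝ :=
  fun i => u i - (∑ j, u j) / (n + 1)

/-- `V₀ = {0,1}^{n+1} \ {0, (1,…,1)}`. -/
def V0set (n : ℕ) : Set (Fin (n + 1) → ℝ) :=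
  {u | (∀ i, u i = 0 ∨ u i = 1) ∧ u ≠ 0 ∧ u ≠ fun _ => 1}

/-- The vertex set of the Voronoï region of `Aₙ`. -/
noncomputable def VPAn (n : ℕ) : Set (Fin (n + 1) → ℝ) := pH n '' V0set n

section Aux

variable {n : ℕ}

lemma vor_expand (z x : Fin (n+1) → ℝ) :
    ∑ i, (z i - x i)^2 = ∑ i, (z i)^2 - 2 * ∑ i, z i * x i + ∑ i, (x i)^2 := by
  have h : ∀ i ∈ Finset.univ, (z i - x i)^2 = ((z i)^2 + (x i)^2) - 2*(z i * x i) :=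
    fun i _ => by ring
  rw [Finset.sum_congr rfl h, Finset.sum_sub_distrib, Finset.sum_add_distrib, Finset.mul_sum]
  ring

lemma mem_vor_iff (z : Fin (n+1) → ℝ) :
    z ∈ VorAn n ↔ z ∈ Hset n ∧ ∀ x ∈ Alat n, 2 * ∑ i, z i * x i ≤ ∑ i, (x i)^2 := by
  unfold VorAn
  simp only [Set.mem_setOf_eq]
  constructor
  · rintro ⟨h1, h2⟩
    refine ⟨h1, fun x hx => ?_⟩
    have h3 := h2 x hx
    rw [vor_expand] at h3; linarith
  · rintro ⟨h1, h2⟩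
    refine ⟨h1, fun x hx => ?_⟩
    rw [vor_expand]; have h3 := h2 x hx; linarith

lemma zero_mem_vor : (0 : Fin (n+1) → ℝ) ∈ VorAn n := by
  constructor
  · simp [Hset]
  · intro x hx
    simp only [Pi.zero_apply, zero_sub, neg_sq]
    have : ∑ i : Fin (n+1), (0:ℝ)^2 = 0 := by simp
    rw [this]
    exact Finset.sum_nonneg fun i _ => sq_nonneg _

lemma diff_le_one_of_mem_vor {z : Fin (n+1) → ℝ} (hz : z ∈ VorAn n) (i j : Fin (n+1)) :
    z i - z j ≤ 1 := by
  rcases eq_or_ne i j with rfl | hij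
  · simp
  · set x : Fin (n+1) → ℝ := fun k => (if k = i then 1 else 0) - (if k = j then 1 else 0)
    with hxdef
    have hxA : x ∈ Alat n := by
      constructor
      · intro k
        by_cases h1 : k = i <;> by_cases h2 : k = j
        · exact absurd (h1 ▸ h2) hij
        · exact ⟨1, by simp [hxdef, h1, h2, hij]⟩
        · exact ⟨-1, by simp [hxdef, h1, h2, Ne.symm hij]⟩
        · exact ⟨0, by simp [hxdef, h1, h2]⟩
      · simp [hxdef, Finset.sum_sub_distrib]
    have h2 := ((mem_vor_iff z).1 hz).2 x hxA
    have hzx : ∑ k, z k * x k = z i - z j := by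
      simp [hxdef, mul_sub, Finset.sum_sub_distrib, mul_ite, mul_one, mul_zero]
    have hxx : ∑ k, (x k)^2 = 2 := by
      have h3 : ∀ k ∈ Finset.univ,
          (x k)^2 = (if k = i then (1:ℝ) else 0) + (if k = j then 1 else 0) := by
        intro k _
        by_cases h1 : k = i <;> by_cases h2 : k = j
        · exact absurd (h1 ▸ h2) hij
        · simp [hxdef, h1, h2, hij]
        · simp [hxdef, h1, h2, Ne.symm hij]
        · simp [hxdef, h1, h2]
      rw [Finset.sum_congr rfl h3, Finset.sum_add_distrib]
      simp
      norm_num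
    rw [hzx, hxx] at h2; linarith

lemma int_sq_add (m : ℤ) : 0 ≤ m^2 + m := by
  rcases le_or_gt 0 m with h | h
  · positivity
  · have h1 : m + 1 ≤ 0 := h
    nlinarith [mul_nonneg (neg_nonneg.2 h.le) (neg_nonneg.2 h1)]

lemma mem_vor_of_diff_le_one {z : Fin (n+1) → ℝ} (hz : z ∈ Hset n)
    (h : ∀ i j, z i - z j ≤ 1) : z ∈ VorAn n := by
  rw [mem_vor_iff]
  refine ⟨hz, fun x hx => ?_⟩
  obtain ⟨i1, hi1⟩ := Finite.exists_min z
  have key : ∀ k, 2 * ((z k - z i1) * x k) ≤ (x k)^2 + x k := by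
    intro k
    obtain ⟨m, hm⟩ := hx.1 k
    have h0 : 0 ≤ z k - z i1 := sub_nonneg.2 (hi1 k)
    have h1 : z k - z i1 ≤ 1 := h k i1
    have hp : 0 ≤ (x k)^2 + x k := by
      rw [hm]
      exact_mod_cast int_sq_add m
    have hq : 0 ≤ (x k)^2 - x k := by
      rw [hm]
      have := int_sq_add (-m)
      have h2 : (0:ℝ) ≤ (m:ℝ)^2 - m := by exact_mod_cast (by linarith [int_sq_add (-m)] : (0:ℤ) ≤ m^2 - m)
      exact h2
    nlinarith [mul_nonneg (sub_nonneg.2 h1) hp, mul_nonneg h0 hq]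
  have e2 : ∑ k, (z k - z i1) * x k = ∑ k, z k * x k := by
    have h3 : ∀ k ∈ Finset.univ, (z k - z i1) * x k = z k * x k - z i1 * x k :=
      fun k _ => by ring
    rw [Finset.sum_congr rfl h3, Finset.sum_sub_distrib, ← Finset.mul_sum, hx.2, mul_zero,
      sub_zero]
  have hsum : ∑ k, 2 * ((z k - z i1) * x k) ≤ ∑ k, ((x k)^2 + x k) :=
    Finset.sum_le_sum fun k _ => key k
  rw [← Finset.mul_sum, e2, Finset.sum_add_distrib, hx.2, add_zero] at hsum
  exact hsum

end Aux

theorem norm_voronoi_An_eq_max_sub_min (n : ℕ) (hn : 2 ≤ n) :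
    ∀ x ∈ Hset n,
      sInf {l : ℝ | 0 ≤ l ∧ x ∈ l • VorAn n} = (⨆ i, x i) - (⨅ i, x i) := by
  intro x hx
  obtain ⟨i0, hi0⟩ := Finite.exists_max x
  obtain ⟨i1, hi1⟩ := Finite.exists_min x
  have hsup : (⨆ i, x i) = x i0 :=
    le_antisymm (ciSup_le hi0) (le_ciSup (Set.finite_range x).bddAbove i0)
  have hinf : (⨅ i, x i) = x i1 :=
    le_antisymm (ciInf_le (Set.finite_range x).bddBelow i1) (le_ciInf hi1)
  rw [hsup, hinf]
  set G := x i0 - x i1 with hGdef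
  have hG0 : 0 ≤ G := sub_nonneg.2 (hi1 i0)
  have hGmax : ∀ i j, x i - x j ≤ G := fun i j => sub_le_sub (hi0 i) (hi1 j)
  have hxzero : G = 0 → x = 0 := by
    intro hG
    have h01 : x i0 = x i1 := by rw [hGdef] at hG; linarith
    have heq : ∀ i, x i = x i1 := fun i => le_antisymm (h01 ▸ hi0 i) (hi1 i)
    have hsum : ∑ i, x i = (n+1 : ℝ) * x i1 := by
      rw [Finset.sum_congr rfl (fun i _ => heq i)]
      simp [Finset.sum_const, Finset.card_univ, mul_comm]
    have hxs : (n+1:ℝ) * x i1 = 0 := by rw [← hsum]; exact hx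
    have hne : (n+1:ℝ) ≠ 0 := by positivity
    have hv : x i1 = 0 := by
      rcases mul_eq_zero.1 hxs with h | h
      · exact absurd h hne
      · exact h
    funext i
    rw [heq i, hv]
    rfl
  have hsetEq : {l : ℝ | 0 ≤ l ∧ x ∈ l • VorAn n} = Set.Ici G := by
    ext l
    simp only [Set.mem_setOf_eq, Set.mem_Ici]
    constructor
    · rintro ⟨hl0, hmem⟩
      rcases hl0.eq_or_lt with rfl | hl
      · rw [zero_smul_set ⟨0, zero_mem_vor⟩] at hmem
        have hx0 : x = 0 := by simpa using hmem
        have hGz : G = 0 := by rw [hGdef, hx0]; simp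
        linarith
      · obtain ⟨z, hzP, hzx⟩ := hmem
        have h1 : z i0 - z i1 ≤ 1 := diff_le_one_of_mem_vor hzP i0 i1
        have h2 : x i0 - x i1 = l * (z i0 - z i1) := by
          rw [← hzx]; simp [smul_eq_mul]; ring
        rw [hGdef, h2]
        calc l * (z i0 - z i1) ≤ l * 1 := mul_le_mul_of_nonneg_left h1 hl.le
          _ = l := mul_one l
    · intro hGl
      have hl0 : 0 ≤ l := hG0.trans hGl
      refine ⟨hl0, ?_⟩
      rcases hl0.eq_or_lt with rfl | hl
      · have hG : G = 0 := le_antisymm hGl hG0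
        rw [zero_smul_set ⟨0, zero_mem_vor⟩]
        simpa using hxzero hG
      · refine ⟨l⁻¹ • x, ?_, ?_⟩
        · apply mem_vor_of_diff_le_one
          · show ∑ i, (l⁻¹ • x) i = 0
            simp only [Pi.smul_apply, smul_eq_mul]
            rw [← Finset.mul_sum]
            rw [show ∑ i, x i = 0 from hx, mul_zero]
          · intro i j
            have h3 : (l⁻¹ • x) i - (l⁻¹ • x) j = l⁻¹ * (x i - x j) := by
              simp [smul_eq_mul]; ring
            rw [h3]
            have h4 : x i - x j ≤ l := (hGmax i j).trans hGl
            have h5 : l⁻¹ * (x i - x j) ≤ l⁻¹ * l :=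
              mul_le_mul_of_nonneg_left h4 (inv_nonneg.2 hl.le)
            rwa [inv_mul_cancel₀ hl.ne'] at h5
        · exact smul_inv_smul₀ hl.ne' x
  rw [hsetEq, csInf_Ici]
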